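/- Let (u_k)_{k≥0}, (λ_k)_{k≥1} be sequences of nonnegative reals and (S_k)_{k≥0} a nondecreasing sequence of reals with S_0 ≥ u_0². Assume that for every k ≥ 1: u_k² ≤ S_k + ∑_{i=1}^{k} λ_i u_i. Then for every k ≥ 1: u_k ≤ (1/2)∑_{i=1}^{k} λ_i + ( S_k + ((1/2)∑_{i=1}^{k} λ_i)² )^{1/2}. -/

import Mathlib

/-- Lemma 1 of Schmidt et al.: recursion lemma controlling error
accumulation. -/
theorem stmt11 (u lam S : ℕ → ℝ)
    (hu : ∀ k, 0 ≤ u k) (hlam : ∀ k, 1 ≤ k → 0 ≤ lam k)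
    (hS : Monotone S) (hS0 : u 0 ^ 2 ≤ S 0)
    (hrec : ∀ k, 1 ≤ k → u k ^ 2 ≤ S k + ∑ i ∈ Finset.Icc 1 k, lam i * u i) :
    ∀ k, 1 ≤ k →
      u k ≤ (1/2) * ∑ i ∈ Finset.Icc 1 k, lam i
        + Real.sqrt (S k + ((1/2) * ∑ i ∈ Finset.Icc 1 k, lam i) ^ 2) := by
  intro k hk
  have hkmem : k ∈ Finset.Icc 1 k := Finset.mem_Icc.mpr ⟨hk, le_refl k⟩
  have hne : (Finset.Icc 1 k).Nonempty := ⟨k, hkmem⟩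
  set M := (Finset.Icc 1 k).sup' hne u with hM
  have hMk : u k ≤ M := Finset.le_sup' u hkmem
  obtain ⟨j, hj, hjM⟩ := Finset.exists_mem_eq_sup' hne u
  have hj1 : 1 ≤ j := (Finset.mem_Icc.mp hj).1
  have hjk : j ≤ k := (Finset.mem_Icc.mp hj).2
  set L := ∑ i ∈ Finset.Icc 1 k, lam i with hL
  have hM0 : 0 ≤ M := le_trans (hu k) hMk
  have hL0 : 0 ≤ L := Finset.sum_nonneg fun i hi => hlam i (Finset.mem_Icc.mp hi).1
  have key : M ^ 2 ≤ S k + L * M := by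
    calc M ^ 2 = u j ^ 2 := by rw [hM, hjM]
      _ ≤ S j + ∑ i ∈ Finset.Icc 1 j, lam i * u i := hrec j hj1
      _ ≤ S k + ∑ i ∈ Finset.Icc 1 k, lam i * u i := by
          refine add_le_add (hS hjk) ?_
          refine Finset.sum_le_sum_of_subset_of_nonneg
            (Finset.Icc_subset_Icc_right hjk) ?_
          intro i hi _
          exact mul_nonneg (hlam i (Finset.mem_Icc.mp hi).1) (hu i)
      _ ≤ S k + ∑ i ∈ Finset.Icc 1 k, lam i * M := by
          refine add_le_add le_rfl (Finset.sum_le_sum ?_)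
          intro i hi
          exact mul_le_mul_of_nonneg_left (Finset.le_sup' u hi)
            (hlam i (Finset.mem_Icc.mp hi).1)
      _ = S k + L * M := by rw [← Finset.sum_mul]
  have hsq : (M - (1/2) * L) ^ 2 ≤ S k + ((1/2) * L) ^ 2 := by nlinarith
  have hle : M - (1/2) * L ≤ Real.sqrt (S k + ((1/2) * L) ^ 2) := by
    calc M - (1/2) * L ≤ |M - (1/2) * L| := le_abs_self _
      _ = Real.sqrt ((M - (1/2) * L) ^ 2) := (Real.sqrt_sq_eq_abs _).symm
      _ ≤ _ := Real.sqrt_le_sqrt hsq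
  linarith
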